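/- Let λ∈(0,1) and let S:ℝ^d×ℝ^d→ℝ be a C² function with S(x+m,X+m)=S(x,X) for all m∈ℤ^d, such that for all (x,X) the matrices ∂²S/∂x²(x,X) and ∂²S/∂X²(x,X) are positive definite and ∂²S/∂x∂X(x,X) is negative definite, and S(x,X)/‖x−X‖ → +∞ as ‖x−X‖→∞. Let F:ℝ^{2d}→ℝ^{2d} be a C¹ diffeomorphism with F(x+m,y)=F(x,y)+(m,0) for all m∈ℤ^d, generated by S (i.e. writing F(x,y)=(X,Y): λy=−(∂S/∂x)(x,X) and Y=(∂S/∂X)(x,X)). Suppose F admits a C⁰-invariant Lagrangian graph L={(x,Ψ(x))} with Ψ=c+Dη (c∈ℝ^d, η C¹ ℤ^d-periodic), and let g:ℝ^d→ℝ^d be the homeomorphism with F(x,Ψ(x))=(g(x),Ψ(g(x))) for all x. Define Ψ̂(x):=⟨c,x⟩+η(x) and K(x,X):=S(x,X)+λΨ̂(x)−Ψ̂(X). Then: (i) for each X∈ℝ^d, the function x↦K(x,X) attains its minimum over ℝ^d at the unique point x=g⁻¹(X); and (ii) for each x∈ℝ^d, the function X↦K(x,X) attains its minimum over ℝ^d at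 the unique point X=g(x). -/

import Mathlib

noncomputable section

open Real

/-- The gradient of `f : ℝ^d → ℝ`, as a vector in `ℝ^d`. -/
def gradVec {d : ℕ} (f : (Fin d → ℝ) → ℝ) (x : Fin d → ℝ) : Fin d → ℝ :=
  fun i => fderiv ℝ f x (Pi.single i 1)

/-- `f` is `ℤ^d`-periodic. -/
def ZdPeriodic {d : ℕ} (f : (Fin d → ℝ) → ℝ) : Prop :=
  ∀ (x : Fin d → ℝ) (m : Fin d → ℤ), f (x + fun i => (m i : ℝ)) = f x

/-- Partial gradient of `S` in the first `ℝ^d`-variable. -/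
def grad1 {d : ℕ} (S : (Fin d → ℝ) → (Fin d → ℝ) → ℝ) (x X : Fin d → ℝ) : Fin d → ℝ :=
  fun i => fderiv ℝ (fun x' => S x' X) x (Pi.single i 1)

/-- Partial gradient of `S` in the second `ℝ^d`-variable. -/
def grad2 {d : ℕ} (S : (Fin d → ℝ) → (Fin d → ℝ) → ℝ) (x X : Fin d → ℝ) : Fin d → ℝ :=
  fun i => fderiv ℝ (fun X' => S x X') X (Pi.single i 1)

/-- The Hessian block `∂²S/∂x²(x,X)`. -/
def hessXX {d : ℕ} (S : (Fin d → ℝ) → (Fin d → ℝ) → ℝ) (x X : Fin d → ℝ) :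
    Matrix (Fin d) (Fin d) ℝ :=
  Matrix.of fun i j => fderiv ℝ (fun x' => grad1 S x' X j) x (Pi.single i 1)

/-- The Hessian block `∂²S/∂X²(x,X)`. -/
def hessYY {d : ℕ} (S : (Fin d → ℝ) → (Fin d → ℝ) → ℝ) (x X : Fin d → ℝ) :
    Matrix (Fin d) (Fin d) ℝ :=
  Matrix.of fun i j => fderiv ℝ (fun X' => grad2 S x X' j) X (Pi.single i 1)

/-- The mixed Hessian block `∂²S/∂x∂X(x,X)`. -/
def hessXY {d : ℕ} (S : (Fin d → ℝ) → (Fin d → ℝ) → ℝ) (x X : Fin d → ℝ) :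
    Matrix (Fin d) (Fin d) ℝ :=
  Matrix.of fun i j => fderiv ℝ (fun x' => grad2 S x' X j) x (Pi.single i 1)


section AuxLemmas

open ContinuousLinearMap

lemma single_eq_ite {d : ℕ} (i : Fin d) :
    (fun j => if i = j then (1:ℝ) else 0) = Pi.single i 1 := by
  ext j; simp [Pi.single_apply, eq_comm]

lemma clm_pi {d : ℕ} {M : Type*} [NormedAddCommGroup M] [NormedSpace ℝ M]
    (B : (Fin d → ℝ) →L[ℝ] M) (v : Fin d → ℝ) :
    B v = ∑ i, v i • B (Pi.single i 1) := by
  conv_lhs => rw [pi_eq_sum_univ v, map_sum]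
  refine Finset.sum_congr rfl fun i _ => ?_
  rw [map_smul, single_eq_ite]

variable {d : ℕ} {S : (Fin d → ℝ) → (Fin d → ℝ) → ℝ}
  (hS : ContDiff ℝ 2 (fun p : (Fin d → ℝ) × (Fin d → ℝ) => S p.1 p.2))
lemma embed1 (X x : Fin d → ℝ) :
    HasFDerivAt (fun x' : Fin d → ℝ => (x', X))
      (ContinuousLinearMap.inl ℝ (Fin d → ℝ) (Fin d → ℝ)) x :=
  (hasFDerivAt_id x).prodMk (hasFDerivAt_const X x)

lemma embed2 (x X : Fin d → ℝ) :
    HasFDerivAt (fun X' : Fin d → ℝ => (x, X'))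
      (ContinuousLinearMap.inr ℝ (Fin d → ℝ) (Fin d → ℝ)) X :=
  (hasFDerivAt_const x X).prodMk (hasFDerivAt_id X)

include hS

lemma slice1 (x X : Fin d → ℝ) :
    HasFDerivAt (fun x' => S x' X)
      ((fderiv ℝ (fun p : (Fin d → ℝ) × (Fin d → ℝ) => S p.1 p.2) (x, X)).comp
        (ContinuousLinearMap.inl ℝ _ _)) x :=
  by have h := (((hS.differentiable (by norm_num)) (x, X)).hasFDerivAt).comp x (embed1 X x); exact h

lemma slice2 (x X : Fin d → ℝ) :
    HasFDerivAt (fun X' => S x X')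
      ((fderiv ℝ (fun p : (Fin d → ℝ) × (Fin d → ℝ) => S p.1 p.2) (x, X)).comp
        (ContinuousLinearMap.inr ℝ _ _)) X :=
  (((hS.differentiable (by norm_num)) (x, X)).hasFDerivAt).comp X (embed2 x X)

lemma grad1_eq (x X : Fin d → ℝ) (j : Fin d) :
    grad1 S x X j =
      fderiv ℝ (fun p : (Fin d → ℝ) × (Fin d → ℝ) => S p.1 p.2) (x, X) (Pi.single j 1, 0) := by
  rw [grad1, (slice1 hS x X).fderiv]; rfl

lemma grad2_eq (x X : Fin d → ℝ) (j : Fin d) :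
    grad2 S x X j =
      fderiv ℝ (fun p : (Fin d → ℝ) × (Fin d → ℝ) => S p.1 p.2) (x, X) (0, Pi.single j 1) := by
  rw [grad2, (slice2 hS x X).fderiv]; rfl

lemma fderiv_inl_dot (x X v : Fin d → ℝ) :
    fderiv ℝ (fun p : (Fin d → ℝ) × (Fin d → ℝ) => S p.1 p.2) (x, X) (v, 0)
      = ∑ j, v j * grad1 S x X j := by
  have h : ((v, 0) : (Fin d → ℝ) × (Fin d → ℝ)) = ContinuousLinearMap.inl ℝ _ _ v := rfl
  rw [h, ← ContinuousLinearMap.comp_apply,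
    clm_pi ((fderiv ℝ (fun p : (Fin d → ℝ) × (Fin d → ℝ) => S p.1 p.2) (x, X)).comp
      (ContinuousLinearMap.inl ℝ _ _)) v]
  exact Finset.sum_congr rfl fun j _ => by rw [grad1_eq hS]; rfl

lemma fderiv_inr_dot (x X v : Fin d → ℝ) :
    fderiv ℝ (fun p : (Fin d → ℝ) × (Fin d → ℝ) => S p.1 p.2) (x, X) (0, v)
      = ∑ j, v j * grad2 S x X j := by
  have h : ((0, v) : (Fin d → ℝ) × (Fin d → ℝ)) = ContinuousLinearMap.inr ℝ _ _ v := rfl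
  rw [h, ← ContinuousLinearMap.comp_apply,
    clm_pi ((fderiv ℝ (fun p : (Fin d → ℝ) × (Fin d → ℝ) => S p.1 p.2) (x, X)).comp
      (ContinuousLinearMap.inr ℝ _ _)) v]
  exact Finset.sum_congr rfl fun j _ => by rw [grad2_eq hS]; rfl

lemma hS'cd : ContDiff ℝ 1 (fderiv ℝ (fun p : (Fin d → ℝ) × (Fin d → ℝ) => S p.1 p.2)) :=
  hS.fderiv_right (by norm_num)

lemma hessXY_eq (x X : Fin d → ℝ) (i j : Fin d) :
    hessXY S x X i j =
      fderiv ℝ (fderiv ℝ (fun p : (Fin d → ℝ) × (Fin d → ℝ) => S p.1 p.2)) (x, X)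
        (Pi.single i 1, 0) (0, Pi.single j 1) := by
  have hfun : (fun x' => grad2 S x' X j)
      = fun x' => fderiv ℝ (fun p : (Fin d → ℝ) × (Fin d → ℝ) => S p.1 p.2) (x', X)
          (0, Pi.single j 1) := funext fun x' => grad2_eq hS x' X j
  have hd : HasFDerivAt
      (fun x' => fderiv ℝ (fun p : (Fin d → ℝ) × (Fin d → ℝ) => S p.1 p.2) (x', X)
        (0, Pi.single j 1))
      ((ContinuousLinearMap.apply ℝ ℝ ((0 : Fin d → ℝ), Pi.single j 1)).comp
        ((fderiv ℝ (fderiv ℝ (fun p : (Fin d → ℝ) × (Fin d → ℝ) => S p.1 p.2)) (x, X)).comp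
          (ContinuousLinearMap.inl ℝ _ _))) x := by
    exact (ContinuousLinearMap.apply ℝ ℝ ((0 : Fin d → ℝ), Pi.single j 1)).hasFDerivAt.comp x
      ((((hS'cd hS).differentiable one_ne_zero (x, X)).hasFDerivAt).comp x (embed1 X x))
  show fderiv ℝ (fun x' => grad2 S x' X j) x (Pi.single i 1) = _
  rw [hfun, hd.fderiv]; rfl

lemma curve_hasDerivAt (x X v : Fin d → ℝ) (w : (Fin d → ℝ) × (Fin d → ℝ)) (t : ℝ) :
    HasDerivAt
      (fun t : ℝ => fderiv ℝ (fun p : (Fin d → ℝ) × (Fin d → ℝ) => S p.1 p.2) (x + t • v, X) w)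
      (fderiv ℝ (fderiv ℝ (fun p : (Fin d → ℝ) × (Fin d → ℝ) => S p.1 p.2)) (x + t • v, X)
        (v, 0) w) t := by
  have h1 : HasDerivAt (fun t : ℝ => x + t • v) v t := by
    simpa using ((hasDerivAt_id t).smul_const v).const_add x
  have hγ : HasDerivAt (fun t : ℝ => ((x + t • v, X) : (Fin d → ℝ) × (Fin d → ℝ)))
      ((v, 0) : (Fin d → ℝ) × (Fin d → ℝ)) t := h1.prodMk (hasDerivAt_const t X)
  have h2 := (((hS'cd hS).differentiable one_ne_zero (x + t • v, X)).hasFDerivAt).comp_hasDerivAt t hγ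
  exact (ContinuousLinearMap.apply ℝ ℝ w).hasFDerivAt.comp_hasDerivAt t h2

lemma curve_hasDerivAt' (x X v : Fin d → ℝ) (w : (Fin d → ℝ) × (Fin d → ℝ)) (t : ℝ) :
    HasDerivAt
      (fun t : ℝ => fderiv ℝ (fun p : (Fin d → ℝ) × (Fin d → ℝ) => S p.1 p.2) (x, X + t • v) w)
      (fderiv ℝ (fderiv ℝ (fun p : (Fin d → ℝ) × (Fin d → ℝ) => S p.1 p.2)) (x, X + t • v)
        (0, v) w) t := by
  have h1 : HasDerivAt (fun t : ℝ => X + t • v) v t := by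
    simpa using ((hasDerivAt_id t).smul_const v).const_add X
  have hγ : HasDerivAt (fun t : ℝ => ((x, X + t • v) : (Fin d → ℝ) × (Fin d → ℝ)))
      ((0, v) : (Fin d → ℝ) × (Fin d → ℝ)) t := (hasDerivAt_const t x).prodMk h1
  have h2 := (((hS'cd hS).differentiable one_ne_zero (x, X + t • v)).hasFDerivAt).comp_hasDerivAt t hγ
  exact (ContinuousLinearMap.apply ℝ ℝ w).hasFDerivAt.comp_hasDerivAt t h2

lemma quad_expand (x X v : Fin d → ℝ) :
    fderiv ℝ (fderiv ℝ (fun p : (Fin d → ℝ) × (Fin d → ℝ) => S p.1 p.2)) (x, X) (v, 0) (0, v)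
      = ∑ i, v i * ∑ j, v j * hessXY S x X i j := by
  set B := fderiv ℝ (fderiv ℝ (fun p : (Fin d → ℝ) × (Fin d → ℝ) => S p.1 p.2)) (x, X) with hB
  have h1 : ((v, 0) : (Fin d → ℝ) × (Fin d → ℝ)) = ContinuousLinearMap.inl ℝ _ _ v := rfl
  rw [h1, ← ContinuousLinearMap.comp_apply,
    clm_pi (B.comp (ContinuousLinearMap.inl ℝ _ _)) v, ContinuousLinearMap.sum_apply]
  refine Finset.sum_congr rfl fun i _ => ?_
  rw [ContinuousLinearMap.smul_apply, smul_eq_mul]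
  congr 1
  have h2 : ((0, v) : (Fin d → ℝ) × (Fin d → ℝ)) = ContinuousLinearMap.inr ℝ _ _ v := rfl
  simp only [ContinuousLinearMap.comp_apply, ContinuousLinearMap.inl_apply]
  rw [h2, ← ContinuousLinearMap.comp_apply,
    clm_pi ((B (Pi.single i 1, 0)).comp (ContinuousLinearMap.inr ℝ _ _)) v]
  simp only [ContinuousLinearMap.comp_apply, ContinuousLinearMap.inr_apply]
  refine Finset.sum_congr rfl fun j _ => ?_
  rw [smul_eq_mul]
  congr 1
  rw [hessXY_eq hS]

lemma quad_neg (hneg : ∀ x X : Fin d → ℝ, (-(hessXY S x X)).PosDef)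
    (x X : Fin d → ℝ) {v : Fin d → ℝ} (hv : v ≠ 0) :
    fderiv ℝ (fderiv ℝ (fun p : (Fin d → ℝ) × (Fin d → ℝ) => S p.1 p.2)) (x, X) (v, 0) (0, v)
      < 0 := by
  have h := (hneg x X).dotProduct_mulVec_pos hv
  rw [quad_expand hS]
  have : dotProduct (star v) ((-(hessXY S x X)).mulVec v) = -∑ i, v i * ∑ j, v j * hessXY S x X i j := by
    simp only [star_trivial, dotProduct, Matrix.mulVec, Matrix.neg_apply,
      Finset.mul_sum, ← Finset.sum_neg_distrib]
    exact Finset.sum_congr rfl fun i _ => Finset.sum_congr rfl fun j _ => by ring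
  rw [this] at h
  linarith

omit hS in
lemma decrease {k k' : ℝ → ℝ} (hk : ∀ t, HasDerivAt k (k' t) t) (hneg' : ∀ t, k' t < 0) :
    k 1 < k 0 := by
  have h := strictAntiOn_of_deriv_neg (convex_Icc (0:ℝ) 1)
    (fun t _ => (hk t).continuousAt.continuousWithinAt)
    (fun t _ => by rw [(hk t).deriv]; exact hneg' t)
  exact h (Set.left_mem_Icc.2 zero_le_one) (Set.right_mem_Icc.2 zero_le_one) zero_lt_one

lemma grad2_injective (hneg : ∀ x X : Fin d → ℝ, (-(hessXY S x X)).PosDef)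
    (X : Fin d → ℝ) {x1 x2 : Fin d → ℝ} (h : grad2 S x1 X = grad2 S x2 X) : x1 = x2 := by
  by_contra hne
  have hv : x2 - x1 ≠ 0 := sub_ne_zero.2 (Ne.symm hne)
  have hlt := decrease (curve_hasDerivAt hS x1 X (x2 - x1) (0, x2 - x1))
    (fun t => quad_neg hS hneg _ X hv)
  rw [show x1 + (1:ℝ) • (x2 - x1) = x2 by simp, show x1 + (0:ℝ) • (x2 - x1) = x1 by simp,
    fderiv_inr_dot hS, fderiv_inr_dot hS, h] at hlt
  exact lt_irrefl _ hlt

lemma grad1_injective (hneg : ∀ x X : Fin d → ℝ, (-(hessXY S x X)).PosDef)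
    (x : Fin d → ℝ) {X1 X2 : Fin d → ℝ} (h : grad1 S x X1 = grad1 S x X2) : X1 = X2 := by
  by_contra hne
  have hv : X2 - X1 ≠ 0 := sub_ne_zero.2 (Ne.symm hne)
  have hsym : ∀ t : ℝ,
      fderiv ℝ (fderiv ℝ (fun p : (Fin d → ℝ) × (Fin d → ℝ) => S p.1 p.2))
          (x, X1 + t • (X2 - X1)) (0, X2 - X1) (X2 - X1, 0)
        = fderiv ℝ (fderiv ℝ (fun p : (Fin d → ℝ) × (Fin d → ℝ) => S p.1 p.2))
          (x, X1 + t • (X2 - X1)) (X2 - X1, 0) (0, X2 - X1) := fun t =>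
    second_derivative_symmetric
      (fun y => ((hS.differentiable (by norm_num)) y).hasFDerivAt)
      (((hS'cd hS).differentiable one_ne_zero _).hasFDerivAt) _ _
  have hlt := decrease (curve_hasDerivAt' hS x X1 (X2 - X1) (X2 - X1, 0))
    (fun t => by rw [hsym t]; exact quad_neg hS hneg x _ hv)
  rw [show X1 + (1:ℝ) • (X2 - X1) = X2 by simp, show X1 + (0:ℝ) • (X2 - X1) = X1 by simp,
    fderiv_inl_dot hS, fderiv_inl_dot hS, h] at hlt
  exact lt_irrefl _ hlt

omit hS in
lemma periodic_bounded {η : (Fin d → ℝ) → ℝ} (hc : Continuous η) (hper : ZdPeriodic η) :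
    ∃ C, ∀ x, |η x| ≤ C := by
  have hcomp : IsCompact (Set.Icc (0 : Fin d → ℝ) 1) := isCompact_Icc
  obtain ⟨z, _, hz⟩ := hcomp.exists_isMaxOn ⟨0, Set.mem_Icc.2 ⟨le_refl _, fun i => zero_le_one⟩⟩ (continuous_abs.comp hc).continuousOn
  refine ⟨|η z|, fun x => ?_⟩
  set m : Fin d → ℤ := fun i => ⌊x i⌋ with hm
  set y : Fin d → ℝ := fun i => Int.fract (x i) with hy
  have hxy : x = y + fun i => ((m i : ℤ) : ℝ) := by
    funext i
    show x i = Int.fract (x i) + ((⌊x i⌋ : ℤ) : ℝ)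
    rw [Int.fract]; ring
  have h1 : η x = η y := by rw [hxy, hper y m]
  have h2 : y ∈ Set.Icc (0 : Fin d → ℝ) 1 := by
    constructor <;> intro i
    · exact Int.fract_nonneg _
    · exact le_of_lt (Int.fract_lt_one _)
  rw [h1]
  exact hz h2

omit hS in
lemma tendsto_of_bound {f : (Fin d → ℝ) → ℝ} (a : Fin d → ℝ) (B R : ℝ)
    (h : ∀ x, R ≤ ‖x - a‖ → ‖x - a‖ - B ≤ f x) :
    Filter.Tendsto f (Filter.cocompact (Fin d → ℝ)) Filter.atTop := by
  rw [Filter.tendsto_atTop]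
  intro b
  filter_upwards [tendsto_norm_cocompact_atTop.eventually_ge_atTop
    (max (R + ‖a‖) (b + B + ‖a‖))] with x hx
  have hns : ‖x‖ - ‖a‖ ≤ ‖x - a‖ := norm_sub_norm_le x a
  have hx1 : R + ‖a‖ ≤ ‖x‖ := le_trans (le_max_left _ _) hx
  have hx2 : b + B + ‖a‖ ≤ ‖x‖ := le_trans (le_max_right _ _) hx
  have h1 : R ≤ ‖x - a‖ := by linarith
  have := h x h1
  linarith

omit hS in
lemma psihat_hasFDerivAt {c : Fin d → ℝ} {η : (Fin d → ℝ) → ℝ} (hη : ContDiff ℝ 1 η)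
    {Ψhat : (Fin d → ℝ) → ℝ} (hΨhat : ∀ x, Ψhat x = (∑ i, c i * x i) + η x) (x : Fin d → ℝ) :
    HasFDerivAt Ψhat
      ((∑ i, c i • ContinuousLinearMap.proj (R := ℝ) (φ := fun _ : Fin d => ℝ) i)
        + fderiv ℝ η x) x := by
  have hfun : Ψhat = fun x => (∑ i, c i * x i) + η x := funext hΨhat
  have h1 : HasFDerivAt (fun x : Fin d → ℝ => ∑ i, c i * x i)
      (∑ i, c i • ContinuousLinearMap.proj (R := ℝ) (φ := fun _ : Fin d => ℝ) i) x := by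
    have h2 : (fun x : Fin d → ℝ => ∑ i, c i * x i)
        = fun x => (∑ i, c i • ContinuousLinearMap.proj (R := ℝ) (φ := fun _ : Fin d => ℝ) i) x := by
      funext y
      simp [ContinuousLinearMap.sum_apply]
    rw [h2]
    exact (∑ i, c i • ContinuousLinearMap.proj (R := ℝ) (φ := fun _ : Fin d => ℝ) i).hasFDerivAt
  rw [hfun]
  exact h1.add (hη.differentiable one_ne_zero x).hasFDerivAt

omit hS in
lemma lc_apply (c : Fin d → ℝ) (i : Fin d) :
    (∑ j, c j • ContinuousLinearMap.proj (R := ℝ) (φ := fun _ : Fin d => ℝ) j) (Pi.single i 1)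
      = c i := by
  simp [ContinuousLinearMap.sum_apply, Pi.single_apply, eq_comm]

end AuxLemmas

theorem minimization_characterization (d : ℕ) (lam : ℝ) (hlam : lam ∈ Set.Ioo (0 : ℝ) 1)
    (S : (Fin d → ℝ) → (Fin d → ℝ) → ℝ)
    (hS : ContDiff ℝ 2 (fun p : (Fin d → ℝ) × (Fin d → ℝ) => S p.1 p.2))
    (hSper : ∀ (x X : Fin d → ℝ) (m : Fin d → ℤ),
      S (x + fun i => (m i : ℝ)) (X + fun i => (m i : ℝ)) = S x X)
    (hpos1 : ∀ x X : Fin d → ℝ, (hessXX S x X).PosDef)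
    (hpos2 : ∀ x X : Fin d → ℝ, (hessYY S x X).PosDef)
    (hneg : ∀ x X : Fin d → ℝ, (-(hessXY S x X)).PosDef)
    (hcoer : ∀ A : ℝ, ∃ R : ℝ, ∀ x X : Fin d → ℝ, R ≤ ‖x - X‖ → A ≤ S x X / ‖x - X‖)
    (F Finv : (Fin d → ℝ) × (Fin d → ℝ) → (Fin d → ℝ) × (Fin d → ℝ))
    (hF : ContDiff ℝ 1 F) (hFinv : ContDiff ℝ 1 Finv)
    (hFl : ∀ p, Finv (F p) = p) (hFr : ∀ p, F (Finv p) = p)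
    (hFper : ∀ (p : (Fin d → ℝ) × (Fin d → ℝ)) (m : Fin d → ℤ),
      F (p.1 + fun i => (m i : ℝ), p.2) = ((F p).1 + fun i => (m i : ℝ), (F p).2))
    (hgen : ∀ p : (Fin d → ℝ) × (Fin d → ℝ),
      lam • p.2 = -(grad1 S p.1 (F p).1) ∧ (F p).2 = grad2 S p.1 (F p).1)
    (c : Fin d → ℝ) (η : (Fin d → ℝ) → ℝ) (hη : ContDiff ℝ 1 η) (hηper : ZdPeriodic η)
    (Ψ : (Fin d → ℝ) → (Fin d → ℝ)) (hΨ : ∀ x, Ψ x = c + gradVec η x)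
    (hinv : F '' {p | p.2 = Ψ p.1} = {p | p.2 = Ψ p.1})
    -- g is the homeomorphism with F(x, Ψ x) = (g x, Ψ (g x))
    (g ginv : (Fin d → ℝ) → (Fin d → ℝ))
    (hgc : Continuous g) (hginvc : Continuous ginv)
    (hgl : ∀ x, ginv (g x) = x) (hgr : ∀ x, g (ginv x) = x)
    (hconj : ∀ x, F (x, Ψ x) = (g x, Ψ (g x)))
    -- Ψ̂(x) = ⟨c,x⟩ + η(x) and K(x,X) = S(x,X) + λΨ̂(x) − Ψ̂(X)
    (Ψhat : (Fin d → ℝ) → ℝ) (hΨhat : ∀ x, Ψhat x = (∑ i, c i * x i) + η x)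
    (K : (Fin d → ℝ) → (Fin d → ℝ) → ℝ)
    (hK : ∀ x X, K x X = S x X + lam * Ψhat x - Ψhat X) :
    -- (i) x ↦ K(x,X) attains its minimum exactly at x = g⁻¹(X)
    (∀ X x : Fin d → ℝ, x ≠ ginv X → K (ginv X) X < K x X) ∧
    -- (ii) X ↦ K(x,X) attains its minimum exactly at X = g(x)
    (∀ x X : Fin d → ℝ, X ≠ g x → K x (g x) < K x X) := by
  obtain ⟨hlam0, hlam1⟩ := hlam
  obtain ⟨Cη, hCη⟩ := periodic_bounded hη.continuous hηper
  have hCη0 : 0 ≤ Cη := le_trans (abs_nonneg _) (hCη 0)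
  set Cc : ℝ := ∑ i, |c i| with hCc
  have hCc0 : 0 ≤ Cc := Finset.sum_nonneg fun i _ => abs_nonneg _
  obtain ⟨R, hR⟩ := hcoer (Cc + 1)
  -- bound on Ψhat
  have hΨb : ∀ x, |Ψhat x| ≤ Cc * ‖x‖ + Cη := by
    intro x
    rw [hΨhat]
    refine le_trans (abs_add_le _ _) (add_le_add ?_ (hCη x))
    refine le_trans (Finset.abs_sum_le_sum_abs _ _) ?_
    rw [hCc, Finset.sum_mul]
    refine Finset.sum_le_sum fun i _ => ?_
    rw [abs_mul]
    refine mul_le_mul_of_nonneg_left ?_ (abs_nonneg _)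
    exact (Real.norm_eq_abs (x i)) ▸ norm_le_pi_norm x i
  -- continuity of Ψhat
  have hΨhatc : Continuous Ψhat := by
    have : Ψhat = fun x => (∑ i, c i * x i) + η x := funext hΨhat
    rw [this]
    exact (continuous_finset_sum _ fun i _ =>
      continuous_const.mul (continuous_apply i)).add hη.continuous
  have hScont : Continuous (fun p : (Fin d → ℝ) × (Fin d → ℝ) => S p.1 p.2) := hS.continuous
  -- value of Ψ componentwise
  have hΨi : ∀ x i, Ψ x i = c i + fderiv ℝ η x (Pi.single i 1) := by
    intro x i
    rw [hΨ x]; rfl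
  -- criticality ⇒ identification, part (i)
  have hcrit1 : ∀ (X x0 : Fin d → ℝ), (∀ z, K x0 X ≤ K z X) → x0 = ginv X := by
    intro X x0 hmin
    have hloc : IsLocalMin (fun x' => K x' X) x0 := Filter.Eventually.of_forall hmin
    have hKfun : (fun x' => K x' X) = fun x' => S x' X + (lam * Ψhat x' - Ψhat X) :=
      funext fun x' => by rw [hK]; ring
    have hd : HasFDerivAt (fun x' => K x' X)
        (((fderiv ℝ (fun p : (Fin d → ℝ) × (Fin d → ℝ) => S p.1 p.2) (x0, X)).comp
          (ContinuousLinearMap.inl ℝ _ _)) +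
          (lam • ((∑ i, c i • ContinuousLinearMap.proj (R := ℝ) (φ := fun _ : Fin d => ℝ) i)
            + fderiv ℝ η x0))) x0 := by
      rw [hKfun]
      exact (slice1 hS x0 X).add
        (((psihat_hasFDerivAt hη hΨhat x0).const_mul lam).sub_const (Ψhat X))
    have hL0 := hloc.hasFDerivAt_eq_zero hd
    have hcomp : ∀ i, grad1 S x0 X i + lam * Ψ x0 i = 0 := by
      intro i
      have h1 : (0 : (Fin d → ℝ) →L[ℝ] ℝ) (Pi.single i 1) = 0 := rfl
      rw [← hL0] at h1
      rw [ContinuousLinearMap.add_apply, ContinuousLinearMap.smul_apply,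
        ContinuousLinearMap.add_apply, lc_apply, ContinuousLinearMap.comp_apply,
        ContinuousLinearMap.inl_apply] at h1
      rw [grad1_eq hS, hΨi]
      rw [smul_eq_mul] at h1
      exact h1
    have hg1 := (hgen (x0, Ψ x0)).1
    rw [hconj x0] at hg1
    have hcomp2 : ∀ i, grad1 S x0 (g x0) i + lam * Ψ x0 i = 0 := by
      intro i
      have := congrFun hg1 i
      simp only [Pi.smul_apply, smul_eq_mul, Pi.neg_apply] at this
      linarith [this]
    have heq : grad1 S x0 X = grad1 S x0 (g x0) := by
      funext i
      have := hcomp i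
      have := hcomp2 i
      linarith
    have hXg : X = g x0 := grad1_injective hS hneg x0 heq
    rw [hXg, hgl]
  -- criticality ⇒ identification, part (ii)
  have hcrit2 : ∀ (x X0 : Fin d → ℝ), (∀ z, K x X0 ≤ K x z) → X0 = g x := by
    intro x X0 hmin
    have hloc : IsLocalMin (fun X' => K x X') X0 := Filter.Eventually.of_forall hmin
    have hKfun : (fun X' => K x X') = fun X' => (S x X' + lam * Ψhat x) - Ψhat X' :=
      funext fun X' => by rw [hK]
    have hd : HasFDerivAt (fun X' => K x X')
        (((fderiv ℝ (fun p : (Fin d → ℝ) × (Fin d → ℝ) => S p.1 p.2) (x, X0)).comp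
          (ContinuousLinearMap.inr ℝ _ _)) -
          ((∑ i, c i • ContinuousLinearMap.proj (R := ℝ) (φ := fun _ : Fin d => ℝ) i)
            + fderiv ℝ η X0)) X0 := by
      rw [hKfun]
      exact ((slice2 hS x X0).add_const (lam * Ψhat x)).sub (psihat_hasFDerivAt hη hΨhat X0)
    have hL0 := hloc.hasFDerivAt_eq_zero hd
    have hcomp : ∀ i, grad2 S x X0 i = Ψ X0 i := by
      intro i
      have h1 : (0 : (Fin d → ℝ) →L[ℝ] ℝ) (Pi.single i 1) = 0 := rfl
      rw [← hL0] at h1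
      rw [ContinuousLinearMap.sub_apply, ContinuousLinearMap.add_apply, lc_apply,
        ContinuousLinearMap.comp_apply, ContinuousLinearMap.inr_apply] at h1
      rw [grad2_eq hS, hΨi]
      linarith [h1]
    have hg2 := (hgen (ginv X0, Ψ (ginv X0))).2
    have hFp : F (ginv X0, Ψ (ginv X0)) = (X0, Ψ X0) := by
      rw [hconj (ginv X0), hgr]
    rw [hFp] at hg2
    have heq : grad2 S x X0 = grad2 S (ginv X0) X0 := by
      funext i
      rw [hcomp i, ← hg2]
    have := grad2_injective hS hneg X0 heq
    rw [this, hgr]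
  -- existence of minimizers, part (i)
  have hex1 : ∀ X : Fin d → ℝ, ∃ x0, ∀ z, K x0 X ≤ K z X := by
    intro X
    refine Continuous.exists_forall_le ?_ ?_
    · have : (fun x' => K x' X) = fun x' => S x' X + lam * Ψhat x' - Ψhat X := funext fun x' => hK x' X
      rw [this]
      exact ((hScont.comp (continuous_id.prodMk continuous_const)).add
        (continuous_const.mul hΨhatc)).sub continuous_const
    · refine tendsto_of_bound X (Cc * ‖X‖ + Cη + Ψhat X) (max R 1) ?_
      intro x hx
      have h0 : (0:ℝ) < ‖x - X‖ := lt_of_lt_of_le zero_lt_one (le_trans (le_max_right R 1) hx)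
      have hSlb : (Cc + 1) * ‖x - X‖ ≤ S x X :=
        (le_div_iff₀ h0).1 (hR x X (le_trans (le_max_left R 1) hx))
      have hb := abs_le.1 (hΨb x)
      have hA : 0 ≤ Cc * ‖x‖ + Cη := by positivity
      have hlamb : -(Cc * ‖x‖ + Cη) ≤ lam * Ψhat x := by
        nlinarith [mul_le_mul_of_nonneg_left hb.1 hlam0.le,
          mul_nonneg (sub_nonneg.2 hlam1.le) hA]
      have hxn : ‖x‖ ≤ ‖x - X‖ + ‖X‖ := by
        have := norm_sub_norm_le x X; linarith
      have hmul : Cc * ‖x‖ ≤ Cc * ‖x - X‖ + Cc * ‖X‖ := by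
        nlinarith [mul_le_mul_of_nonneg_left hxn hCc0]
      rw [hK]
      nlinarith
  -- existence of minimizers, part (ii)
  have hex2 : ∀ x : Fin d → ℝ, ∃ X0, ∀ z, K x X0 ≤ K x z := by
    intro x
    refine Continuous.exists_forall_le ?_ ?_
    · show Continuous fun X' => K x X'
      have : (fun X' => K x X') = fun X' => S x X' + lam * Ψhat x - Ψhat X' := funext fun X' => hK x X'
      rw [this]
      exact ((hScont.comp (continuous_const.prodMk continuous_id)).add
        continuous_const).sub hΨhatc
    · refine tendsto_of_bound x (Cc * ‖x‖ + Cη - lam * Ψhat x) (max R 1) ?_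
      intro X hX
      have hrev : ‖x - X‖ = ‖X - x‖ := norm_sub_rev x X
      have h0 : (0:ℝ) < ‖x - X‖ := by
        rw [hrev]; exact lt_of_lt_of_le zero_lt_one (le_trans (le_max_right R 1) hX)
      have hSlb : (Cc + 1) * ‖x - X‖ ≤ S x X :=
        (le_div_iff₀ h0).1 (hR x X (by rw [hrev]; exact le_trans (le_max_left R 1) hX))
      have hb := abs_le.1 (hΨb X)
      have hXn : ‖X‖ ≤ ‖X - x‖ + ‖x‖ := by
        have := norm_sub_norm_le X x; linarith
      have hmul : Cc * ‖X‖ ≤ Cc * ‖X - x‖ + Cc * ‖x‖ := by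
        nlinarith [mul_le_mul_of_nonneg_left hXn hCc0]
      rw [hK, hrev] at *
      nlinarith [hb.2]
  constructor
  · intro X x hx
    obtain ⟨x0, hx0⟩ := hex1 X
    have hx0id : x0 = ginv X := hcrit1 X x0 hx0
    rw [hx0id] at hx0
    refine lt_of_le_of_ne (hx0 x) fun hEq => ?_
    have hxmin : ∀ z, K x X ≤ K z X := fun z => hEq ▸ hx0 z
    exact hx (hcrit1 X x hxmin)
  · intro x X hX
    obtain ⟨X0, hX0⟩ := hex2 x
    have hX0id : X0 = g x := hcrit2 x X0 hX0
    rw [hX0id] at hX0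
    refine lt_of_le_of_ne (hX0 X) fun hEq => ?_
    have hXmin : ∀ z, K x X ≤ K x z := fun z => hEq ▸ hX0 z
    exact hX (hcrit2 x X hXmin)
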